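/- arXiv:2504.07752 — 6 statements merged into one kernel-verified Lean document; each statement's English description precedes it below -/
import Mathlib

section
/- Let m ≥ 1 and let X_0, X_1, …, X_N be vectors in ℝ^m such that (1) X_0 = 0; (2) for each t with 1 ≤ t ≤ N, X_t and X_{t-1} differ in exactly one coordinate, and in that coordinate by exactly +1 or −1; (3) for every coordinate i ∈ {1,…,m} there exists some t such that X_t and X_{t-1} differ in the i-th coordinate. Then there exist indices t_1, …, t_m ∈ {0,…,N} such that the vectors X_{t_1}, …, X_{t_m} form a basis of ℝ^m. -/
/-- If `X 0 = 0`, consecutive vectors differ in exactly one coordinate by `±1`,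
and every coordinate changes at some step, then some subfamily `X (ts 1), …, X (ts m)`
forms a basis of `ℝ^m`. -/
theorem stmt0 (m N : ℕ) (hm : 1 ≤ m) (X : ℕ → Fin m → ℝ)
    (h0 : X 0 = 0)
    (hstep : ∀ t, 1 ≤ t → t ≤ N → ∃ i : Fin m,
      (X t i - X (t - 1) i = 1 ∨ X t i - X (t - 1) i = -1) ∧
      ∀ j : Fin m, j ≠ i → X t j = X (t - 1) j)
    (hall : ∀ i : Fin m, ∃ t, 1 ≤ t ∧ t ≤ N ∧ X t i ≠ X (t - 1) i) :
    ∃ ts : Fin m → ℕ, (∀ i, ts i ≤ N) ∧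
      LinearIndependent ℝ (fun i => X (ts i)) ∧
      Submodule.span ℝ (Set.range fun i => X (ts i)) = ⊤ := by
  classical
  set s : Set (Fin m → ℝ) := X '' {t | t ≤ N} with hs
  -- The span of all visited points is everything.
  have hspan : Submodule.span ℝ s = ⊤ := by
    rw [eq_top_iff, ← (Pi.basisFun ℝ (Fin m)).span_eq, Submodule.span_le]
    rintro _ ⟨i, rfl⟩
    rw [Pi.basisFun_apply]
    obtain ⟨t, ht1, htN, hne⟩ := hall i
    obtain ⟨i', hd, hrest⟩ := hstep t ht1 htN
    have hii' : i = i' := by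
      by_contra h; exact hne (hrest i h)
    subst hii'
    set d : ℝ := X t i - X (t - 1) i with hdd
    have hdiff : X t - X (t - 1) = d • (Pi.single i 1 : Fin m → ℝ) := by
      funext j
      by_cases hj : j = i
      · subst hj; simp [hdd]
      · simp [Pi.single_eq_of_ne hj, hrest j hj]
    have hd2 : d * d = 1 := by rcases hd with h | h <;> rw [h] <;> ring
    have hsingle : (Pi.single i 1 : Fin m → ℝ) = d • (X t - X (t - 1)) := by
      rw [hdiff, smul_smul, hd2, one_smul]
    rw [hsingle]
    have h1 : X t ∈ Submodule.span ℝ s :=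
      Submodule.subset_span ⟨t, htN, rfl⟩
    have h2 : X (t - 1) ∈ Submodule.span ℝ s :=
      Submodule.subset_span ⟨t - 1, le_trans (Nat.sub_le t 1) htN, rfl⟩
    exact Submodule.smul_mem _ _ (Submodule.sub_mem _ h1 h2)
  -- Extract a linearly independent spanning subset.
  obtain ⟨b, hbs, hbspan, hbli⟩ := exists_linearIndependent ℝ s
  rw [hspan] at hbspan
  have hbfin : b.Finite := hbli.setFinite
  haveI : Fintype b := hbfin.fintype
  have hB : Module.Basis b ℝ (Fin m → ℝ) := Module.Basis.mk hbli (by rw [Subtype.range_val, hbspan])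
  have hcard : Fintype.card b = m := by
    rw [← Module.finrank_eq_card_basis hB, Module.finrank_fin_fun]
  have e : Fin m ≃ b := (Fintype.equivFinOfCardEq hcard).symm
  -- Each element of b is X t for some t ≤ N.
  have hchoose : ∀ i : Fin m, ∃ t, t ≤ N ∧ X t = (e i : Fin m → ℝ) := by
    intro i
    obtain ⟨t, ht, hXt⟩ := hbs (e i).2
    exact ⟨t, ht, hXt⟩
  choose ts hts hXts using hchoose
  refine ⟨ts, hts, ?_, ?_⟩
  · have : (fun i => X (ts i)) = (Subtype.val ∘ e) := by
      funext i; exact hXts i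
    rw [this]
    exact hbli.comp e e.injective
  · have : (Set.range fun i => X (ts i)) = b := by
      ext x
      constructor
      · rintro ⟨i, rfl⟩
        show X (ts i) ∈ b
        rw [hXts i]; exact (e i).2
      · intro hx
        refine ⟨e.symm ⟨x, hx⟩, ?_⟩
        show X (ts (e.symm ⟨x, hx⟩)) = x
        rw [hXts]; simp
    rw [this, hbspan]
end

section
/- Let r, n be integers with 0 ≤ r ≤ n and let g(x,y) = Σ_{j=0}^{r} Σ_{k=0}^{n−r} g_{j,k} x^j y^k be a bivariate polynomial with real coefficients satisfying the skew-symmetry g(x,y) = −x^r · g(1/x, y) (i.e., g_{j,k} = −g_{r−j,k} for all j,k). Suppose that the polynomial f(x,y) := Σ_{j,k} g_{j,k} (x+y)^j (1+x)^{r−j} y^k is identically zero. Then g is identically zero. -/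
open MvPolynomial Finset

/-- A polynomial function vanishing off `1` has zero coefficients. -/
lemma stmt4_aux (m : ℕ) (c : ℕ → ℝ)
    (h : ∀ x : ℝ, x ≠ 1 → ∑ i ∈ range m, c i * x ^ i = 0) :
    ∀ i ∈ range m, c i = 0 := by
  set P : Polynomial ℝ := ∑ i ∈ range m, Polynomial.C (c i) * Polynomial.X ^ i with hP
  have heval : ∀ x : ℝ, P.eval x = ∑ i ∈ range m, c i * x ^ i := by
    intro x
    simp [hP, Polynomial.eval_finset_sum]
  have hP0 : P = 0 := by
    apply Polynomial.eq_zero_of_infinite_isRoot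
    apply ((Set.finite_singleton (1:ℝ)).infinite_compl).mono
    intro x hx
    simp only [Set.mem_compl_iff, Set.mem_singleton_iff] at hx
    simp only [Set.mem_setOf_eq, Polynomial.IsRoot, heval]
    exact h x hx
  intro i hi
  have := congrArg (fun p => Polynomial.coeff p i) hP0
  simpa [hP, Polynomial.finset_sum_coeff, Polynomial.coeff_C_mul,
    Polynomial.coeff_X_pow, Finset.sum_ite_eq' (range m) i, hi] using this

/-- If `g` has coefficients supported in `{0,…,r} × {0,…,n−r}`,
satisfies the skew-symmetry `g_{j,k} = −g_{r−j,k}`, and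
`∑_{j,k} g_{j,k} (x+y)^j (1+x)^{r−j} y^k` is the zero polynomial, then `g = 0`. -/
theorem stmt4 (n r : ℕ) (hrn : r ≤ n) (g : ℕ → ℕ → ℝ)
    (hsupp : ∀ j k, (r < j ∨ n - r < k) → g j k = 0)
    (hskew : ∀ j ≤ r, ∀ k, g j k = -g (r - j) k)
    (hf : (∑ j ∈ range (r + 1), ∑ k ∈ range (n - r + 1),
        C (g j k) * (X 0 + X 1) ^ j * (1 + X 0) ^ (r - j) * (X 1) ^ k
        : MvPolynomial (Fin 2) ℝ) = 0) :
    ∀ j k, g j k = 0 := by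
  have key : ∀ s t : ℝ, s ≠ 1 → t ≠ 1 →
      ∑ j ∈ range (r + 1), ∑ k ∈ range (n - r + 1), g j k * s ^ j * t ^ k = 0 := by
    intro s t hs ht
    set x : ℝ := (s - t) / (1 - s) with hx
    have h1s : (1:ℝ) - s ≠ 0 := sub_ne_zero.mpr (Ne.symm hs)
    have h1t : (1:ℝ) - t ≠ 0 := sub_ne_zero.mpr (Ne.symm ht)
    have hx1 : 1 + x = (1 - t) / (1 - s) := by
      rw [hx]; field_simp; ring
    have hx0 : 1 + x ≠ 0 := by
      rw [hx1]; exact div_ne_zero h1t h1s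
    have hxy : x + t = s * (1 + x) := by
      rw [hx1, hx]; field_simp; ring_nf
    have h0 := congrArg (eval ![x, t]) hf
    simp only [map_sum, map_zero] at h0
    have hterm : ∀ j ∈ range (r + 1), ∀ k ∈ range (n - r + 1),
        eval ![x, t] (C (g j k) * (X 0 + X 1) ^ j * (1 + X 0) ^ (r - j) * (X 1) ^ k)
          = (1 + x) ^ r * (g j k * s ^ j * t ^ k) := by
      intro j hj k hk
      have hjr : j ≤ r := Nat.lt_succ_iff.mp (mem_range.mp hj)
      simp only [eval_mul, eval_pow, eval_add, eval_C, eval_X, map_one,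
        Matrix.cons_val_zero, Matrix.cons_val_one, Matrix.head_cons]
      have h2 : (1+x)^j * (1+x)^(r-j) = (1+x)^r := by
        rw [← pow_add, Nat.add_sub_cancel' hjr]
      rw [hxy, mul_pow]
      linear_combination (g j k * s ^ j * t ^ k) * h2
    rw [Finset.sum_congr rfl (fun j hj => Finset.sum_congr rfl (hterm j hj))] at h0
    simp only [← Finset.mul_sum] at h0
    rcases mul_eq_zero.mp h0 with h | h
    · exact absurd h (pow_ne_zero r hx0)
    · exact h
  have key2 : ∀ j, ∀ t : ℝ, t ≠ 1 → ∑ k ∈ range (n - r + 1), g j k * t ^ k = 0 := by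
    intro j t ht
    by_cases hjr : j ∈ range (r + 1)
    · exact stmt4_aux (r + 1) (fun j => ∑ k ∈ range (n - r + 1), g j k * t ^ k)
        (fun s hs => by
          rw [← key s t hs ht]
          rw [Finset.sum_congr rfl (fun j _ => Finset.sum_mul _ _ _)]
          congr 1; ext j; congr 1; ext k; ring) j hjr
    · have hj : r < j := by simpa [Nat.lt_succ_iff, not_le] using hjr
      simp [hsupp j _ (Or.inl hj)]
  intro j k
  by_cases hk : k ∈ range (n - r + 1)
  · exact stmt4_aux (n - r + 1) (g j) (key2 j) k hk
  · exact hsupp j k (Or.inr (by simpa [Nat.lt_succ_iff, not_le] using hk))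
end

section
/- For all integers n, r, j, k with 1 ≤ j ≤ (r−1)/2 and 0 ≤ k ≤ (n−r−1)/2 (in particular n > r ≥ 2j+1), the quantity C(n−k−r+j, j) · C(k+r−1−j, k) − C(n−k−r+j−1, j−1) · C(k+r−j, k) is strictly positive, where C(a,b) denotes the binomial coefficient. -/
/-- For `1 ≤ j ≤ (r−1)/2` and `0 ≤ k ≤ (n−r−1)/2`,
`C(n−k−r+j, j)·C(k+r−1−j, k) − C(n−k−r+j−1, j−1)·C(k+r−j, k) > 0`. -/
theorem stmt6 (n r j k : ℕ) (hj : 1 ≤ j) (hjr : 2 * j + 1 ≤ r)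
    (hk : 2 * k + 1 + r ≤ n) :
    0 < (Nat.choose (n - k - r + j) j : ℤ) * Nat.choose (k + r - 1 - j) k
        - Nat.choose (n - k - r + j - 1) (j - 1) * Nat.choose (k + r - j) k := by
  obtain ⟨jm, rfl⟩ : ∃ jm, j = jm + 1 := ⟨j - 1, by omega⟩
  obtain ⟨dm, hdm, rfl⟩ : ∃ dm, jm + 1 ≤ dm ∧ r = jm + 1 + (dm + 1) :=
    ⟨r - jm - 2, by omega, by omega⟩
  obtain ⟨am, ham, rfl⟩ : ∃ am, k ≤ am ∧ n = k + (jm + 1 + (dm + 1)) + (am + 1) :=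
    ⟨n - k - (jm + 1 + (dm + 1)) - 1, by omega, by omega⟩
  rw [show k + (jm + 1 + (dm + 1)) + (am + 1) - k - (jm + 1 + (dm + 1)) + (jm + 1)
        = am + jm + 2 from by omega,
      show k + (jm + 1 + (dm + 1)) - 1 - (jm + 1) = k + dm from by omega,
      show am + jm + 2 - 1 = am + jm + 1 from by omega,
      show jm + 1 - 1 = jm from by omega,
      show k + (jm + 1 + (dm + 1)) - (jm + 1) = k + dm + 1 from by omega]
  have hA : (am + jm + 2).choose (jm + 1) * (jm + 1)
      = (am + jm + 2) * (am + jm + 1).choose jm := (Nat.add_one_mul_choose_eq _ _).symm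
  have hB : (k + dm + 1).choose (dm + 1) * (dm + 1)
      = (k + dm + 1) * (k + dm).choose dm := (Nat.add_one_mul_choose_eq _ _).symm
  have hs1 : (k + dm).choose dm = (k + dm).choose k := by
    rw [← Nat.choose_symm (by omega)]; congr 1; omega
  have hs2 : (k + dm + 1).choose (dm + 1) = (k + dm + 1).choose k := by
    rw [← Nat.choose_symm (by omega)]; congr 1; omega
  have hApos : 0 < (am + jm + 1).choose jm := Nat.choose_pos (by omega)
  have hBpos : 0 < (k + dm).choose k := Nat.choose_pos (by omega)
  rw [hs1] at hB
  rw [hs2] at hB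
  have hnat : (am + jm + 1).choose jm * (k + dm + 1).choose k
      < (am + jm + 2).choose (jm + 1) * (k + dm).choose k := by
    apply Nat.lt_of_mul_lt_mul_right (a := (jm + 1) * (dm + 1))
    calc (am + jm + 1).choose jm * (k + dm + 1).choose k * ((jm + 1) * (dm + 1))
        = ((k + dm + 1).choose k * (dm + 1)) * ((am + jm + 1).choose jm * (jm + 1)) := by ring
      _ = ((k + dm + 1) * (k + dm).choose k) * ((am + jm + 1).choose jm * (jm + 1)) := by rw [hB]
      _ < ((am + jm + 2).choose (jm + 1) * (jm + 1)) * ((k + dm).choose k * (dm + 1)) := by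
          rw [hA]
          have key : (k + dm + 1) * (jm + 1) < (am + jm + 2) * (dm + 1) := by nlinarith
          calc (k + dm + 1) * (k + dm).choose k * ((am + jm + 1).choose jm * (jm + 1))
              = ((k + dm + 1) * (jm + 1)) * ((k + dm).choose k * (am + jm + 1).choose jm) := by
                ring
            _ < ((am + jm + 2) * (dm + 1)) * ((k + dm).choose k * (am + jm + 1).choose jm) := by
                exact Nat.mul_lt_mul_of_lt_of_le key (le_refl _) (by positivity)
            _ = (am + jm + 2) * (am + jm + 1).choose jm * ((k + dm).choose k * (dm + 1)) := by
                ring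
      _ = (am + jm + 2).choose (jm + 1) * (k + dm).choose k * ((jm + 1) * (dm + 1)) := by ring
  have := hnat
  push_cast at this ⊢
  omega
end

section
/- Let V = {v_1, …, v_n} ⊂ ℝ^r be a vector configuration in general position, and let W ⊆ V with |W| ≤ r−1. Then W is extremal (i.e., there is a nonzero u ∈ ℝ^r with ⟨u,v⟩ = 0 for all v ∈ W and ⟨u,v⟩ > 0 for all v ∈ V∖W) if and only if there is no nontrivial linear dependence Σ_{v∈V} λ_v v = 0 with {v : λ_v < 0} ⊆ W. -/
set_option maxHeartbeats 1000000

open Finset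
open scoped RealInnerProductSpace

/-- For a vector configuration in general position and `W ⊆ V` with
`|W| ≤ r−1`, the subset `W` is extremal iff there is no nontrivial linear
dependence `∑ λ_i v_i = 0` with `{i : λ_i < 0} ⊆ W`. -/
theorem stmt14 (n r : ℕ) (hr : 1 ≤ r) (hrn : r ≤ n) (V : Fin n → Fin r → ℝ)
    (hgp : ∀ s : Finset (Fin n), s.card = r →
      LinearIndependent ℝ (fun i : {x // x ∈ s} => V i))
    (W : Finset (Fin n)) (hW : W.card < r) :
    (∃ u : Fin r → ℝ, u ≠ 0 ∧
        (∀ i ∈ W, (∑ j, u j * V i j) = 0) ∧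
        (∀ i ∉ W, 0 < ∑ j, u j * V i j)) ↔
    ¬ ∃ lam : Fin n → ℝ, lam ≠ 0 ∧ (∑ i, lam i • V i) = 0 ∧
        ∀ i, lam i < 0 → i ∈ W := by
  classical
  constructor
  · rintro ⟨u, hu0, huW, huS⟩ ⟨lam, hlam0, hdep, hneg⟩
    have hdep' : ∀ j, ∑ i, lam i * V i j = 0 := by
      intro j
      have := congrFun hdep j
      simpa using this
    have key : ∑ i, lam i * (∑ j, u j * V i j) = 0 := by
      calc ∑ i, lam i * ∑ j, u j * V i j
          = ∑ i, ∑ j, u j * (lam i * V i j) := by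
            refine Finset.sum_congr rfl fun i _ => ?_
            rw [Finset.mul_sum]
            exact Finset.sum_congr rfl fun j _ => by ring
        _ = ∑ j, ∑ i, u j * (lam i * V i j) := Finset.sum_comm
        _ = ∑ j, u j * ∑ i, lam i * V i j := by
            refine Finset.sum_congr rfl fun j _ => ?_
            rw [Finset.mul_sum]
        _ = 0 := by simp [hdep']
    have hsplit : ∑ i ∈ Finset.univ \ W, lam i * (∑ j, u j * V i j) = 0 := by
      have h1 := Finset.sum_sdiff (Finset.subset_univ W)
        (f := fun i => lam i * (∑ j, u j * V i j))
      have hWzero : ∑ i ∈ W, lam i * (∑ j, u j * V i j) = 0 :=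
        Finset.sum_eq_zero fun i hi => by rw [huW i hi, mul_zero]
      rw [hWzero, add_zero] at h1
      rw [h1]; exact key
    have hlam_off : ∀ i ∉ W, lam i = 0 := by
      intro i hi
      have hnonneg : ∀ k ∈ Finset.univ \ W, 0 ≤ lam k * (∑ j, u j * V k j) := by
        intro k hk
        have hk' : k ∉ W := (Finset.mem_sdiff.mp hk).2
        have h1 : 0 ≤ lam k := le_of_not_gt fun hlt => hk' (hneg k hlt)
        exact mul_nonneg h1 (le_of_lt (huS k hk'))
      have h2 := (Finset.sum_eq_zero_iff_of_nonneg hnonneg).mp hsplit i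
        (Finset.mem_sdiff.mpr ⟨Finset.mem_univ i, hi⟩)
      have hpos := huS i hi
      rcases mul_eq_zero.mp h2 with h3 | h3
      · exact h3
      · exact absurd h3 (ne_of_gt hpos)
    obtain ⟨s, hWs, hscard⟩ := Finset.exists_superset_card_eq (le_of_lt hW)
      (by simpa using hrn)
    have hli := hgp s hscard
    have hsum_s : ∑ i : {x // x ∈ s}, lam i • V i = 0 := by
      have h1 : ∑ i : {x // x ∈ s}, lam (i : Fin n) • V (i : Fin n)
          = ∑ i ∈ s, lam i • V i := Finset.sum_coe_sort s (fun i => lam i • V i)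
      have h2 : ∑ i ∈ s, lam i • V i = ∑ i, lam i • V i := by
        refine Finset.sum_subset (Finset.subset_univ s) fun i _ hi => ?_
        have : i ∉ W := fun hmem => hi (hWs hmem)
        rw [hlam_off i this, zero_smul]
      rw [h1, h2, hdep]
    have hzero_s := Fintype.linearIndependent_iff.mp hli
      (fun i : {x // x ∈ s} => lam i) hsum_s
    apply hlam0
    funext i
    by_cases hi : i ∈ s
    · exact hzero_s ⟨i, hi⟩
    · exact hlam_off i fun hmem => hi (hWs hmem)
  · intro h
    set vE : Fin n → EuclideanSpace ℝ (Fin r) := fun i => WithLp.toLp 2 (V i) with hvE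
    have hinner : ∀ x y : EuclideanSpace ℝ (Fin r), ⟪x, y⟫ = ∑ j, x j * y j := by
      intro x y
      simp [PiLp.inner_apply, RCLike.inner_apply, mul_comm]
    set K : Submodule ℝ (EuclideanSpace ℝ (Fin r)) :=
      Submodule.span ℝ (Set.range fun i : {x // x ∈ W} => vE i) with hK
    set w : Fin n → EuclideanSpace ℝ (Fin r) :=
      fun i => (Kᗮ.orthogonalProjectionOnto (vE i) : EuclideanSpace ℝ (Fin r)) with hw
    have hwK : ∀ i, w i ∈ Kᗮ := fun i => (Kᗮ.orthogonalProjectionOnto (vE i)).2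
    set D : Set (Fin n → ℝ) :=
      {μ | (∀ i, 0 ≤ μ i) ∧ (∀ i ∈ W, μ i = 0) ∧ ∑ i, μ i = 1} with hD
    have hDcompact : IsCompact D := by
      have hcl : IsClosed {μ : Fin n → ℝ | ∀ i ∈ W, μ i = 0} := by
        have heq : {μ : Fin n → ℝ | ∀ i ∈ W, μ i = 0} = ⋂ i ∈ W, {μ | μ i = 0} := by
          ext μ; simp
        rw [heq]
        exact isClosed_biInter fun i _ => isClosed_eq (continuous_apply i) continuous_const
      have h1 : D = stdSimplex ℝ (Fin n) ∩ {μ | ∀ i ∈ W, μ i = 0} := by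
        ext μ
        simp only [hD, Set.mem_setOf_eq, Set.mem_inter_iff, stdSimplex, Set.mem_setOf_eq]
        tauto
      rw [h1]
      exact (isCompact_stdSimplex ℝ (Fin n)).inter_right hcl
    have hScard : (Finset.univ \ W).Nonempty := by
      rw [← Finset.card_pos, Finset.card_sdiff_of_subset (Finset.subset_univ W)]
      simp only [Finset.card_univ, Fintype.card_fin]
      omega
    obtain ⟨i0, hi0⟩ := hScard
    have hi0W : i0 ∉ W := (Finset.mem_sdiff.mp hi0).2
    have hDne : D.Nonempty := by
      refine ⟨fun i => if i = i0 then 1 else 0, fun i => ?_, fun i hi => ?_, ?_⟩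
      · dsimp only; split <;> norm_num
      · have : i ≠ i0 := fun hii => hi0W (hii ▸ hi)
        simp [this]
      · simp
    set g : (Fin n → ℝ) → EuclideanSpace ℝ (Fin r) := fun μ => ∑ i, μ i • w i with hg
    have hgcont : Continuous g := by
      refine continuous_finset_sum _ fun i _ => ?_
      exact (continuous_apply i).smul continuous_const
    have hfcont : Continuous fun μ => ‖g μ‖ ^ 2 := (hgcont.norm).pow 2
    obtain ⟨μ, hμD, hμmin⟩ := hDcompact.exists_isMinOn hDne hfcont.continuousOn
    set u : EuclideanSpace ℝ (Fin r) := g μ with hu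
    obtain ⟨hμpos, hμW, hμsum⟩ := hμD
    have hu0 : u ≠ 0 := by
      intro h0
      apply h
      have hproj : (∑ i, μ i • vE i) ∈ Kᗮᗮ := by
        rw [← Submodule.orthogonalProjectionOnto_eq_zero_iff]
        have hlin : Kᗮ.orthogonalProjectionOnto (∑ i, μ i • vE i)
            = ∑ i, μ i • Kᗮ.orthogonalProjectionOnto (vE i) := by
          rw [map_sum]
          exact Finset.sum_congr rfl fun i _ => map_smul _ _ _
        have hcoe : ((∑ i, μ i • Kᗮ.orthogonalProjectionOnto (vE i) : Kᗮ) :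
            EuclideanSpace ℝ (Fin r)) = u := by
          rw [hu, hg]
          push_cast
          rfl
        rw [hlin]
        exact Subtype.ext (by rw [hcoe, h0]; simp)
      rw [Submodule.orthogonal_orthogonal, hK,
        Submodule.mem_span_range_iff_exists_fun] at hproj
      obtain ⟨c, hc⟩ := hproj
      set lam : Fin n → ℝ := fun i => μ i - (if hiW : i ∈ W then c ⟨i, hiW⟩ else 0)
        with hlam
      have hlam_offW : ∀ i ∉ W, lam i = μ i := by
        intro i hi; simp [hlam, hi]
      refine ⟨lam, ?_, ?_, ?_⟩
      · intro h0'
        have h1 : ∑ i ∈ Finset.univ \ W, lam i = 1 := by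
          rw [Finset.sum_congr rfl (fun i hi => hlam_offW i (Finset.mem_sdiff.mp hi).2)]
          have h2 : ∑ i ∈ Finset.univ \ W, μ i = ∑ i, μ i := by
            refine Finset.sum_subset (Finset.subset_univ _) fun i _ hi => ?_
            have : i ∈ W := by
              by_contra hiW
              exact hi (Finset.mem_sdiff.mpr ⟨Finset.mem_univ i, hiW⟩)
            exact hμW i this
          rw [h2, hμsum]
        rw [h0'] at h1
        simpa using h1
      · -- the dependence, expressed for V
        have hdepE : ∑ i, lam i • vE i = 0 := by
          have hA : ∑ i, lam i • vE i
              = ∑ i, μ i • vE i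
                - ∑ i, (if hiW : i ∈ W then c ⟨i, hiW⟩ else 0) • vE i := by
            rw [← Finset.sum_sub_distrib]
            exact Finset.sum_congr rfl fun i _ => by rw [hlam]; rw [sub_smul]
          have hB : ∑ i, (if hiW : i ∈ W then c ⟨i, hiW⟩ else 0) • vE i
              = ∑ i ∈ W, (if hiW : i ∈ W then c ⟨i, hiW⟩ else 0) • vE i := by
            symm
            refine Finset.sum_subset (Finset.subset_univ W) fun i _ hi => ?_
            simp [hi]
          have hC : ∑ i ∈ W, (if hiW : i ∈ W then c ⟨i, hiW⟩ else 0) • vE i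
              = ∑ i : {x // x ∈ W}, c i • vE i := by
            rw [← Finset.sum_coe_sort W
              (fun i => (if hiW : i ∈ W then c ⟨i, hiW⟩ else 0) • vE i)]
            exact Finset.sum_congr rfl fun i _ => by simp [i.2]
          rw [hA, hB, hC, hc, sub_self]
        simpa [hvE] using congrArg WithLp.ofLp hdepE
      · intro i hi
        by_contra hiW
        rw [hlam_offW i hiW] at hi
        exact absurd (hμpos i) (not_le.mpr hi)
    have hkey : ∀ i ∉ W, (‖u‖ ^ 2 : ℝ) ≤ ⟪u, w i⟫ := by
      intro i hiW
      by_contra hlt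
      push_neg at hlt
      set c : ℝ := ⟪u, w i - u⟫ with hc
      have hcneg : c < 0 := by
        rw [hc, inner_sub_right, real_inner_self_eq_norm_sq]
        linarith
      set d : ℝ := ‖w i - u‖ ^ 2 with hd
      have hdnn : 0 ≤ d := by positivity
      set t : ℝ := min 1 (-c / (d + 1)) with ht
      have ht0 : 0 < t := by
        apply lt_min one_pos
        apply div_pos (by linarith) (by linarith)
      have ht1 : t ≤ 1 := min_le_left _ _
      have htd : t * (d + 1) ≤ -c := by
        have := min_le_right 1 (-c / (d + 1))
        rw [le_div_iff₀ (by linarith : (0:ℝ) < d + 1)] at this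
        exact this
      set ν : Fin n → ℝ := fun j => (1 - t) * μ j + t * (if j = i then 1 else 0) with hν
      have hνD : ν ∈ D := by
        refine ⟨fun j => ?_, fun j hj => ?_, ?_⟩
        · have h1t : (0:ℝ) ≤ 1 - t := by linarith
          have hx1 : 0 ≤ (1 - t) * μ j := mul_nonneg h1t (hμpos j)
          have hx2 : (0:ℝ) ≤ t * (if j = i then 1 else 0) := by
            apply mul_nonneg (le_of_lt ht0); split <;> norm_num
          simp only [hν]; linarith
        · have hji : j ≠ i := fun hji => hiW (hji ▸ hj)
          simp [hν, hμW j hj, hji]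
        · simp only [hν]
          rw [Finset.sum_add_distrib, ← Finset.mul_sum, ← Finset.mul_sum, hμsum]
          simp
      have hgν : g ν = u + t • (w i - u) := by
        have hstep : g ν = (1 - t) • u + t • w i := by
          simp only [hg, hν]
          have hterm : ∀ j, ((1 - t) * μ j + t * (if j = i then 1 else 0)) • w j
              = (1 - t) • (μ j • w j) + (t * (if j = i then 1 else 0)) • w j := by
            intro j; rw [add_smul, mul_smul]
          rw [Finset.sum_congr rfl fun j _ => hterm j, Finset.sum_add_distrib,
            ← Finset.smul_sum]
          congr 1
          have hterm2 : ∀ j, (t * (if j = i then (1:ℝ) else 0)) • w j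
              = if j = i then t • w j else 0 := by
            intro j; split <;> simp [*]
          rw [Finset.sum_congr rfl fun j _ => hterm2 j]
          rw [Finset.sum_ite_eq' Finset.univ i (fun j => t • w j)]
          simp
        rw [hstep]
        module
      have hineq : ‖u‖ ^ 2 ≤ ‖g ν‖ ^ 2 := isMinOn_iff.mp hμmin ν hνD
      rw [hgν] at hineq
      have hexp : ‖u + t • (w i - u)‖ ^ 2 = ‖u‖ ^ 2 + 2 * (t * c) + t ^ 2 * d := by
        rw [norm_add_sq_real, real_inner_smul_right, norm_smul, ← hc, mul_pow, ← hd,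
          Real.norm_eq_abs, abs_of_pos ht0]
      rw [hexp] at hineq
      -- contradiction
      have h2 : 0 ≤ 2 * c + t * d := by nlinarith [hineq, ht0]
      nlinarith [htd, ht0, hcneg, h2]
    have huperp : u ∈ Kᗮ := by
      rw [hu, hg]
      exact Submodule.sum_smul_mem Kᗮ μ fun i _ => hwK i
    have hupos : (0:ℝ) < ‖u‖ ^ 2 := pow_pos (norm_pos_iff.mpr hu0) 2
    refine ⟨u, ?_, ?_, ?_⟩
    · exact fun h0 => hu0 (by ext j; exact congrFun h0 j)
    · intro i hi
      have hvK : vE i ∈ K := Submodule.subset_span ⟨⟨i, hi⟩, rfl⟩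
      have h1 := (Submodule.mem_orthogonal K u).mp huperp (vE i) hvK
      show ∑ j, u.ofLp j * (vE i).ofLp j = 0
      rw [← hinner, real_inner_comm]
      exact h1
    · intro i hi
      have hdiff : vE i - w i ∈ Kᗮᗮ := Kᗮ.sub_starProjection_mem_orthogonal (vE i)
      rw [Submodule.orthogonal_orthogonal] at hdiff
      have h1 : ⟪u, vE i - w i⟫ = 0 := by
        rw [real_inner_comm]
        exact (Submodule.mem_orthogonal K u).mp huperp _ hdiff
      have h2 : ⟪u, vE i⟫ = ⟪u, w i⟫ := by
        have h3 := inner_sub_right (𝕜 := ℝ) u (vE i) (w i)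
        rw [h1] at h3
        linarith
      show 0 < ∑ j, u.ofLp j * (vE i).ofLp j
      rw [← hinner]
      calc (0:ℝ) < ‖u‖ ^ 2 := hupos
        _ ≤ ⟪u, w i⟫ := hkey i hi
        _ = ⟪u, vE i⟫ := h2.symm
end

section
/- For the polynomial p(x) = 2·Σ_{i≥0} C(n, d−2i)·(x+1)^{d−2i} (the total-face-count polynomial of a simple arrangement of n hemispheres in S^d), the coefficient of x^s equals 2·C(n,s)·Σ_{i=0}^{d−s} C(n−s−1, i) for every 0 ≤ s ≤ d, provided n ≥ d+1. Equivalently: Σ_{i=0}^{d} (1+(−1)^i)·C(n, d−i)·C(d−i, s) = 2·C(n,s)·Σ_{i=0}^{d−s} C(n−s−1, i). -/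
open Finset

private lemma aux16 (n s : ℕ) : ∀ t : ℕ, s + t + 1 ≤ n →
    ∑ i ∈ range (s + t + 1),
        (1 + (-1 : ℤ) ^ i) * Nat.choose n (s + t - i) * Nat.choose (s + t - i) s
    = 2 * Nat.choose n s * ∑ i ∈ range (t + 1), (Nat.choose (n - s - 1) i : ℤ)
  | 0, h => by
    rw [Finset.sum_eq_single_of_mem 0 (by simp)]
    · simp
    · intro i hi hne
      have h1 : s + 0 - i < s := by
        simp only [Finset.mem_range] at hi; omega
      rw [Nat.choose_eq_zero_of_lt h1]
      ring
  | 1, h => by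
    have hsum : ∑ i ∈ range (s + 1 + 1),
        (1 + (-1 : ℤ) ^ i) * Nat.choose n (s + 1 - i) * Nat.choose (s + 1 - i) s
        = 2 * Nat.choose n (s + 1) * Nat.choose (s + 1) s := by
      rw [Finset.sum_eq_single_of_mem 0 (by simp)]
      · simp
      · intro i hi hne
        rcases Nat.even_or_odd i with he | ho
        · have h1 : s + 1 - i < s := by
            simp only [Finset.mem_range] at hi
            rcases he with ⟨k, hk⟩
            omega
          rw [Nat.choose_eq_zero_of_lt h1]; ring
        · rw [ho.neg_one_pow]; ring
    rw [hsum]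
    have h2 : Nat.choose (s + 1) s = s + 1 := by simp
    have h3 : ∑ i ∈ range (1 + 1), (Nat.choose (n - s - 1) i : ℤ) = (n : ℤ) - s := by
      rw [Finset.sum_range_succ, Finset.sum_range_one]
      simp only [Nat.choose_zero_right, Nat.choose_one_right]
      have : (↑(n - s - 1) : ℤ) = (n : ℤ) - s - 1 := by
        have : s + 1 ≤ n := by omega
        push_cast [Nat.sub_sub]; omega
      rw [this]; ring
    rw [h2, h3]
    have key : (Nat.choose n (s + 1) * (s + 1) : ℤ) = Nat.choose n s * ((n : ℤ) - s) := by
      have := Nat.choose_succ_right_eq n s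
      have hsn : s ≤ n := by omega
      have : (Nat.choose n (s + 1) * (s + 1) : ℕ) = Nat.choose n s * (n - s) := this
      have hc : ((Nat.choose n (s + 1) * (s + 1) : ℕ) : ℤ)
          = ((Nat.choose n s * (n - s) : ℕ) : ℤ) := by exact_mod_cast this
      push_cast [Nat.sub_sub] at hc
      rw [Nat.cast_sub hsn] at hc
      linarith [hc]
    push_cast
    push_cast at key
    linarith [key]
  | (t + 2), h => by
    have ih := aux16 n s t (by omega)
    have hL : ∑ i ∈ range (s + (t + 2) + 1),
        (1 + (-1 : ℤ) ^ i) * Nat.choose n (s + (t + 2) - i) * Nat.choose (s + (t + 2) - i) s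
        = (∑ i ∈ range (s + t + 1),
            (1 + (-1 : ℤ) ^ i) * Nat.choose n (s + t - i) * Nat.choose (s + t - i) s)
          + 2 * Nat.choose n (s + t + 2) * Nat.choose (s + t + 2) s := by
      have e1 : s + (t + 2) + 1 = (s + t + 1) + 1 + 1 := by ring
      rw [e1, Finset.sum_range_succ', Finset.sum_range_succ']
      have e2 : ∀ i, (1 + (-1 : ℤ) ^ (i + 1 + 1)) * Nat.choose n (s + (t + 2) - (i + 1 + 1))
            * Nat.choose (s + (t + 2) - (i + 1 + 1)) s
          = (1 + (-1 : ℤ) ^ i) * Nat.choose n (s + t - i) * Nat.choose (s + t - i) s := by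
        intro i
        have : s + (t + 2) - (i + 1 + 1) = s + t - i := by omega
        rw [this, pow_succ, pow_succ]
        ring
      rw [Finset.sum_congr rfl (fun i _ => e2 i)]
      have h1 : s + (t + 2) - (0 + 1) = s + t + 1 := by omega
      have h0 : s + (t + 2) - 0 = s + t + 2 := by omega
      rw [h1, h0]
      simp [pow_succ]
    rw [hL, ih]
    have hR : ∑ i ∈ range (t + 2 + 1), (Nat.choose (n - s - 1) i : ℤ)
        = (∑ i ∈ range (t + 1), (Nat.choose (n - s - 1) i : ℤ))
          + Nat.choose (n - s - 1) (t + 1) + Nat.choose (n - s - 1) (t + 2) := by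
      rw [Finset.sum_range_succ, Finset.sum_range_succ]
    rw [hR]
    have hpascal : (Nat.choose (n - s - 1) (t + 1) : ℤ) + Nat.choose (n - s - 1) (t + 2)
        = Nat.choose (n - s) (t + 2) := by
      have hns : n - s = (n - s - 1) + 1 := by omega
      rw [hns, Nat.choose_succ_succ]
      push_cast
      ring
    have hkey : (Nat.choose n (s + t + 2) : ℤ) * Nat.choose (s + t + 2) s
        = Nat.choose n s * Nat.choose (n - s) (t + 2) := by
      have := Nat.choose_mul (n := n) (k := s + t + 2) (s := s) (by omega)
      have h2 : s + t + 2 - s = t + 2 := by omega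
      rw [h2] at this
      exact_mod_cast this
    linear_combination 2 * hkey - 2 * (Nat.choose n s : ℤ) * hpascal

/-- `∑_{i=0}^{d} (1+(−1)^i)·C(n, d−i)·C(d−i, s)
  = 2·C(n,s)·∑_{i=0}^{d−s} C(n−s−1, i)` for `0 ≤ s ≤ d` and `n ≥ d+1`. -/
theorem stmt16 (n d s : ℕ) (hs : s ≤ d) (hn : d + 1 ≤ n) :
    ∑ i ∈ range (d + 1),
        (1 + (-1 : ℤ) ^ i) * Nat.choose n (d - i) * Nat.choose (d - i) s
    = 2 * Nat.choose n s * ∑ i ∈ range (d - s + 1), (Nat.choose (n - s - 1) i : ℤ) := by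
  obtain ⟨t, rfl⟩ : ∃ t, d = s + t := ⟨d - s, by omega⟩
  have hds : s + t - s = t := by omega
  rw [hds]
  exact aux16 n s t hn
end

section
/- Let n ≥ r ≥ 0 and let T : ℝ^{(r+1)×(n−r+1)} → ℝ[x,y] be the linear map sending a matrix g = (g_{j,k}) to the polynomial Σ_{j=0}^r Σ_{k=0}^{n−r} g_{j,k}·(x+y)^j·(1+x)^{r−j}·y^k. Let 𝔊 be the subspace of matrices satisfying g_{j,k} = −g_{r−j,k} = −g_{j,n−r−k} = g_{r−j,n−r−k} for all j,k. Then the restriction of T to 𝔊 is injective, and hence the image T(𝔊) is a linear subspace of ℝ[x,y] of dimension ⌊(r+1)/2⌋·⌊(n−r+1)/2⌋. -/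
open MvPolynomial Finset

private noncomputable def sg19 (t i : ℕ) : ℝ :=
  if 2*i < t then 1 else if 2*i = t then 0 else -1

private lemma sg19_flip (t i : ℕ) (h : i ≤ t) : sg19 t (t - i) = - sg19 t i := by
  unfold sg19; split_ifs <;> try norm_num
  all_goals omega

private lemma sg19_lt {t i : ℕ} (h : 2*i < t) : sg19 t i = 1 := by
  unfold sg19; rw [if_pos h]

private noncomputable def hf19 (a b : ℕ) (h : Fin a → Fin b → ℝ) (p q : ℕ) : ℝ :=
  if hp : p < a then if hq : q < b then h ⟨p,hp⟩ ⟨q,hq⟩ else 0 else 0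

private lemma key19 (m : ℕ) : ∀ r : ℕ, ∀ G : ℕ → ℕ → ℝ,
    (∑ j ∈ range (r+1), ∑ k ∈ range (m+1),
      C (G j k) * (X 0 + X 1)^j * (1 + X 0)^(r-j) * (X 1)^k : MvPolynomial (Fin 2) ℝ) = 0 →
    ∀ j ≤ r, ∀ k ≤ m, G j k = 0 := by
  intro r
  induction r using Nat.strong_induction_on with
  | _ r IH =>
  intro G hsum
  have hrowr : ∀ k ≤ m, G r k = 0 := by
    have h1 := congrArg (aeval (fun i : Fin 2 => if i = 0 then (Polynomial.C (-1:ℝ)) else Polynomial.X)) hsum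
    simp only [map_sum, map_mul, map_pow, map_add, map_one, aeval_X, aeval_C, map_zero] at h1
    norm_num at h1
    rw [Finset.sum_eq_single r (by
        intro b hb hbr
        have : r - b ≠ 0 := by simp at hb; omega
        simp [zero_pow this]) (by intro h; simp at h)] at h1
    simp only [Nat.sub_self, pow_zero, mul_one] at h1
    have h2 : ((-1 + Polynomial.X : Polynomial ℝ)) ^ r * (∑ y ∈ Finset.range (m+1), Polynomial.C (G r y) * Polynomial.X ^ y) = 0 := by
      rw [Finset.mul_sum]; rw [← h1]; apply Finset.sum_congr rfl; intros; ring
    have h3 : (∑ y ∈ Finset.range (m+1), Polynomial.C (G r y) * Polynomial.X ^ y) = 0 := by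
      rcases mul_eq_zero.mp h2 with h | h
      · exfalso
        have : (-1 + Polynomial.X : Polynomial ℝ) ≠ 0 := by
          intro hx
          have := congrArg (Polynomial.eval 0) hx
          norm_num at this
        exact pow_ne_zero r this h
      · exact h
    intro k hk
    have := congrArg (fun p => Polynomial.coeff p k) h3
    simp only [Polynomial.finset_sum_coeff, Polynomial.coeff_C_mul, Polynomial.coeff_X_pow,
      Polynomial.coeff_zero, mul_ite, mul_one, mul_zero] at this
    rw [Finset.sum_ite_eq] at this
    rw [if_pos (by simp; omega)] at this
    exact this
  have hrow0 : ∀ k ≤ m, G 0 k = 0 := by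
    have h1 := congrArg (aeval (fun i : Fin 2 => if i = 0 then (Polynomial.X : Polynomial ℝ) else -Polynomial.X)) hsum
    simp only [map_sum, map_mul, map_pow, map_add, map_one, aeval_X, aeval_C, map_zero] at h1
    norm_num at h1
    rw [Finset.sum_eq_single 0 (by
        intro b hb hbr
        simp [zero_pow hbr]) (by intro h; simp at h)] at h1
    simp only [pow_zero, Nat.sub_zero, one_mul, mul_one] at h1
    have h2 : ((1 + Polynomial.X : Polynomial ℝ)) ^ r * (∑ y ∈ Finset.range (m+1), Polynomial.C (G 0 y) * (-Polynomial.X) ^ y) = 0 := by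
      rw [Finset.mul_sum]; rw [← h1]; apply Finset.sum_congr rfl; intros; ring
    have h3 : (∑ y ∈ Finset.range (m+1), Polynomial.C (G 0 y) * (-Polynomial.X) ^ y) = 0 := by
      rcases mul_eq_zero.mp h2 with h | h
      · exfalso
        have : (1 + Polynomial.X : Polynomial ℝ) ≠ 0 := by
          intro hx
          have := congrArg (Polynomial.eval 0) hx
          norm_num at this
        exact pow_ne_zero r this h
      · exact h
    have h4 : (∑ y ∈ Finset.range (m+1), Polynomial.C ((-1)^y * G 0 y) * Polynomial.X ^ y) = 0 := by
      rw [← h3]; apply Finset.sum_congr rfl; intro y _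
      rw [map_mul, map_pow, map_neg, map_one, neg_pow]; ring
    intro k hk
    have := congrArg (fun p => Polynomial.coeff p k) h4
    simp only [Polynomial.finset_sum_coeff, Polynomial.coeff_C_mul, Polynomial.coeff_X_pow,
      Polynomial.coeff_zero, mul_ite, mul_one, mul_zero] at this
    rw [Finset.sum_ite_eq] at this
    rw [if_pos (by simp; omega)] at this
    rcases mul_eq_zero.mp this with h | h
    · exact absurd h (pow_ne_zero k (by norm_num))
    · exact h
  by_cases hr : r ≤ 1
  · intro j hj k hk
    rcases Nat.eq_zero_or_pos j with rfl | hjpos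
    · exact hrow0 k hk
    · have hjr : j = r := by omega
      rw [hjr]
      exact hrowr k hk
  · obtain ⟨s, rfl⟩ : ∃ s, r = s + 2 := ⟨r - 2, by omega⟩
    have e1 : (∑ j ∈ range (s+3), ∑ k ∈ range (m+1),
        C (G j k) * (X 0 + X 1)^j * (1 + X 0)^(s+2-j) * (X 1)^k : MvPolynomial (Fin 2) ℝ)
        = (X 0 + X 1) * (1 + X 0) * ∑ j ∈ range (s+1), ∑ k ∈ range (m+1),
        C (G (j+1) k) * (X 0 + X 1)^j * (1 + X 0)^(s-j) * (X 1)^k := by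
      conv_lhs => rw [Finset.sum_range_succ]
      have z2 : (∑ k ∈ range (m+1), (C (G (s+2) k) * (X 0 + X 1)^(s+2) * (1 + X 0)^(s+2-(s+2)) * (X 1)^k : MvPolynomial (Fin 2) ℝ)) = 0 := by
        apply Finset.sum_eq_zero; intro k hk
        rw [hrowr k (Nat.lt_succ_iff.mp (Finset.mem_range.mp hk))]; simp
      rw [z2, add_zero]
      conv_lhs => rw [show s + 2 = s + 1 + 1 from rfl, Finset.sum_range_succ']
      have z1 : (∑ k ∈ range (m+1), (C (G 0 k) * (X 0 + X 1)^0 * (1 + X 0)^(s+2-0) * (X 1)^k : MvPolynomial (Fin 2) ℝ)) = 0 := by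
        apply Finset.sum_eq_zero; intro k hk
        rw [hrow0 k (Nat.lt_succ_iff.mp (Finset.mem_range.mp hk))]; simp
      rw [z1, add_zero, Finset.mul_sum]
      apply Finset.sum_congr rfl; intro j hj
      rw [Finset.mul_sum]
      apply Finset.sum_congr rfl; intro k hk
      have hje : s + 2 - (j+1) = (s - j) + 1 := by
        have := Finset.mem_range.mp hj; omega
      rw [hje]; ring
    rw [show s + 2 + 1 = s + 3 from rfl] at hsum
    rw [e1] at hsum
    have hx1 : (X 0 + X 1 : MvPolynomial (Fin 2) ℝ) ≠ 0 := by
      intro h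
      have := congrArg (eval (fun _ => (1:ℝ))) h
      norm_num at this
    have hx2 : (1 + X 0 : MvPolynomial (Fin 2) ℝ) ≠ 0 := by
      intro h
      have := congrArg (eval (fun _ => (1:ℝ))) h
      norm_num at this
    have hinner : (∑ j ∈ range (s+1), ∑ k ∈ range (m+1),
        C (G (j+1) k) * (X 0 + X 1)^j * (1 + X 0)^(s-j) * (X 1)^k : MvPolynomial (Fin 2) ℝ) = 0 := by
      rcases mul_eq_zero.mp hsum with h | h
      · exact absurd h (mul_ne_zero hx1 hx2)
      · exact h
    have hmid := IH s (by omega) (fun j k => G (j+1) k) hinner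
    intro j hj k hk
    rcases Nat.eq_zero_or_pos j with rfl | hjpos
    · exact hrow0 k hk
    · rcases eq_or_lt_of_le hj with rfl | hjlt
      · exact hrowr k hk
      · obtain ⟨i, rfl⟩ : ∃ i, j = i + 1 := ⟨j - 1, by omega⟩
        exact hmid i (by omega) k hk

/-- The linear map `T` sending a matrix `g` to
`∑_{j,k} g_{j,k} (x+y)^j (1+x)^{r−j} y^k` is injective on the subspace `𝔊` of
matrices satisfying the skew-symmetries, and `T(𝔊)` has dimension
`⌊(r+1)/2⌋·⌊(n−r+1)/2⌋`. -/
theorem stmt19 (n r : ℕ) (hrn : r ≤ n)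
    (T : (Fin (r + 1) → Fin (n - r + 1) → ℝ) →ₗ[ℝ] MvPolynomial (Fin 2) ℝ)
    (hT : ∀ g, T g = ∑ j : Fin (r + 1), ∑ k : Fin (n - r + 1),
        C (g j k) * (X 0 + X 1) ^ (j : ℕ) * (1 + X 0) ^ (r - (j : ℕ)) *
          (X 1) ^ (k : ℕ))
    (G : Submodule ℝ (Fin (r + 1) → Fin (n - r + 1) → ℝ))
    (hG : ∀ g, g ∈ G ↔ ∀ (j : Fin (r + 1)) (k : Fin (n - r + 1)),
      g j k = -g j.rev k ∧ g j k = -g j k.rev ∧ g j k = g j.rev k.rev) :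
    (∀ g ∈ G, T g = 0 → g = 0) ∧
    Module.finrank ℝ (Submodule.map T G) = ((r + 1) / 2) * ((n - r + 1) / 2) := by
  have hinj0 : ∀ g, T g = 0 → g = 0 := by
    intro g hTg
    set GG : ℕ → ℕ → ℝ := fun j k =>
      if hj : j < r + 1 then if hk : k < n - r + 1 then g ⟨j, hj⟩ ⟨k, hk⟩ else 0 else 0 with hGG
    have hconv : T g = ∑ j ∈ range (r+1), ∑ k ∈ range ((n-r)+1),
        C (GG j k) * (X 0 + X 1)^j * (1 + X 0)^(r-j) * (X 1)^k := by
      rw [hT]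
      rw [← Fin.sum_univ_eq_sum_range (fun j => ∑ k ∈ range ((n-r)+1),
        (C (GG j k) * (X 0 + X 1)^j * (1 + X 0)^(r-j) * (X 1)^k : MvPolynomial (Fin 2) ℝ)) (r+1)]
      apply Finset.sum_congr rfl; intro j _
      rw [← Fin.sum_univ_eq_sum_range (fun k =>
        (C (GG j.val k) * (X 0 + X 1)^(j.val) * (1 + X 0)^(r-j.val) * (X 1)^k : MvPolynomial (Fin 2) ℝ)) ((n-r)+1)]
      apply Finset.sum_congr rfl; intro k _
      simp [hGG, j.isLt, k.isLt, j.is_le, k.is_le]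
    have hz := key19 (n-r) r GG (by rw [← hconv]; exact hTg)
    funext j k
    have := hz j.val (by omega) k.val (by omega)
    simpa [hGG, j.isLt, k.isLt, j.is_le, k.is_le] using this
  refine ⟨fun g _ => hinj0 g, ?_⟩
  have hTinj : Function.Injective T := by
    rw [← LinearMap.ker_eq_bot, LinearMap.ker_eq_bot']
    exact hinj0
  rw [← LinearEquiv.finrank_eq (Submodule.equivMapOfInjective T hTinj G)]
  -- finrank of G
  set a := (r + 1) / 2 with ha
  set b := (n - r + 1) / 2 with hb
  set R : G →ₗ[ℝ] (Fin a → Fin b → ℝ) :=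
    { toFun := fun g i l => (g : Fin (r+1) → Fin (n-r+1) → ℝ)
        ⟨i.val, lt_of_lt_of_le i.isLt (Nat.div_le_self _ _)⟩
        ⟨l.val, lt_of_lt_of_le l.isLt (Nat.div_le_self _ _)⟩,
      map_add' := fun _ _ => rfl, map_smul' := fun _ _ => rfl } with hR
  have hinjR : ∀ g : G, R g = 0 → g = 0 := by
    rintro ⟨g, hg⟩ h0
    have hz : ∀ (j : Fin (r+1)) (k : Fin (n-r+1)), j.val < a → k.val < b → g j k = 0 := by
      intro j k hj hk
      have := congrFun (congrFun h0 ⟨j.val, hj⟩) ⟨k.val, hk⟩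
      exact this
    apply Subtype.ext
    funext j k
    obtain ⟨h1, h2, h3⟩ := (hG g).mp hg j k
    have hjrev : (j.rev : ℕ) = r - j.val := by simp [Fin.val_rev]
    have hkrev : (k.rev : ℕ) = (n - r) - k.val := by simp [Fin.val_rev]
    show g j k = 0
    rcases lt_trichotomy (2 * j.val) r with hj2 | hj2 | hj2
    · rcases lt_trichotomy (2 * k.val) (n - r) with hk2 | hk2 | hk2
      · exact hz j k (by omega) (by omega)
      · have : k.rev = k := by apply Fin.ext; omega
        rw [this] at h2; linarith
      · rw [h2, hz j k.rev (by omega) (by omega), neg_zero]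
    · have : j.rev = j := by apply Fin.ext; omega
      rw [this] at h1; linarith
    · rcases lt_trichotomy (2 * k.val) (n - r) with hk2 | hk2 | hk2
      · rw [h1, hz j.rev k (by omega) (by omega), neg_zero]
      · have : k.rev = k := by apply Fin.ext; omega
        rw [this] at h2; linarith
      · rw [h3, hz j.rev k.rev (by omega) (by omega)]
  have hsurjR : Function.Surjective R := by
    intro h
    set g : Fin (r+1) → Fin (n-r+1) → ℝ := fun j k =>
      sg19 r j.val * sg19 (n-r) k.val * hf19 a b h (min j.val (r - j.val)) (min k.val ((n-r) - k.val)) with hgdef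
    have hmem : g ∈ G := by
      rw [hG]
      intro j k
      have hjrev : (j.rev : ℕ) = r - j.val := by simp [Fin.val_rev]
      have hkrev : (k.rev : ℕ) = (n - r) - k.val := by simp [Fin.val_rev]
      have hminj : min (r - j.val) (r - (r - j.val)) = min j.val (r - j.val) := by omega
      have hmink : min ((n-r) - k.val) ((n-r) - ((n-r) - k.val)) = min k.val ((n-r) - k.val) := by omega
      refine ⟨?_, ?_, ?_⟩
      · simp only [hgdef, hjrev, hminj, sg19_flip r j.val (by omega)]; ring
      · simp only [hgdef, hkrev, hmink, sg19_flip (n-r) k.val (by omega)]; ring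
      · simp only [hgdef, hjrev, hkrev, hminj, hmink,
          sg19_flip r j.val (by omega), sg19_flip (n-r) k.val (by omega)]; ring
    refine ⟨⟨g, hmem⟩, ?_⟩
    funext i l
    show g ⟨i.val, _⟩ ⟨l.val, _⟩ = h i l
    have hia : i.val < a := i.isLt
    have hlb : l.val < b := l.isLt
    have h2i : 2 * i.val < r := by omega
    have h2l : 2 * l.val < n - r := by omega
    simp only [hgdef]
    rw [show min i.val (r - i.val) = i.val by omega,
        show min l.val ((n-r) - l.val) = l.val by omega,
        sg19_lt h2i, sg19_lt h2l]
    unfold hf19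
    rw [dif_pos hia, dif_pos hlb]
    simp
  have hinjR' : Function.Injective R := by
    rw [← LinearMap.ker_eq_bot, LinearMap.ker_eq_bot']
    exact hinjR
  have e := LinearEquiv.ofBijective R ⟨hinjR', hsurjR⟩
  rw [e.finrank_eq]
  simp [Module.finrank_pi_fintype, Module.finrank_pi]
end
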